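/- arXiv:math/0111325 — 4 statements merged into one kernel-verified Lean document; each statement's English description precedes it below -/
import Mathlib

section
/- With K = Σ_{i,j} (-1)^{[i][j]} θ_i θ_j E_{j̄ ī} ⊗ E_{ji}, the operators P and K satisfy PK = KP = θ₀ K. -/
open Matrix BigOperators Finset

noncomputable section

namespace OspYangian

variable (M N : ℕ) (θ₀ : ℤ)

/-- The grading exponent `[i] ∈ {0,1}`, defined so that `(-1)^[i] = θ₀` for `i < M`
and `(-1)^[i] = -θ₀` for `M ≤ i < M+N` (0-indexed). -/
def gr (i : Fin (M + N)) : ℕ :=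
  if (i : ℕ) < M then (if θ₀ = 1 then 0 else 1) else (if θ₀ = 1 then 1 else 0)

/-- The sign `θ_i`: `+1` for `i < M + N/2`, `-1` otherwise (0-indexed). -/
def th (i : Fin (M + N)) : ℂ :=
  if (i : ℕ) < M + N / 2 then 1 else -1

/-- The conjugate index `ī`: `M+1-i` resp. `2M+N+1-i` in 1-indexed notation. -/
def bar (i : Fin (M + N)) : Fin (M + N) :=
  if _h : (i : ℕ) < M then ⟨M - 1 - (i : ℕ), by omega⟩
  else ⟨2 * M + N - 1 - (i : ℕ), by have := i.isLt; omega⟩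

/-- Coefficient matrices of elements of the graded tensor square of `gl(M|N)`:
the entry at `((i,k),(j,l))` is the coefficient of `E_{ij} ⊗ E_{kl}`. -/
abbrev Mat := Matrix (Fin (M + N) × Fin (M + N)) (Fin (M + N) × Fin (M + N)) ℂ

/-- Multiplication in the graded tensor product algebra:
`(A⊗B)(C⊗D) = (-1)^{[B][C]} AC ⊗ BD` on homogeneous elements. -/
def gmul (A B : Mat M N) : Mat M N := fun p q =>
  ∑ j : Fin (M + N), ∑ l : Fin (M + N),
    (-1 : ℂ) ^ ((gr M N θ₀ p.2 + gr M N θ₀ l) * (gr M N θ₀ j + gr M N θ₀ q.1)) *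
      A p (j, l) * B (j, l) q

/-- The superpermutation `P = Σ_{i,j} (-1)^{[j]} E_{ij} ⊗ E_{ji}`. -/
def P : Mat M N := fun p q =>
  if p.1 = q.2 ∧ p.2 = q.1 then (-1 : ℂ) ^ gr M N θ₀ p.2 else 0

/-- `K = Σ_{i,j} (-1)^{[i][j]} θ_i θ_j E_{j̄ ī} ⊗ E_{ji}`. -/
def K : Mat M N := fun p q =>
  if p.1 = bar M N p.2 ∧ q.1 = bar M N q.2 then
    (-1 : ℂ) ^ (gr M N θ₀ q.2 * gr M N θ₀ p.2) * th M N q.2 * th M N p.2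
  else 0

lemma bar_val_lt (i : Fin (M + N)) (h : (i : ℕ) < M) :
    (bar M N i : ℕ) = M - 1 - (i : ℕ) := by
  unfold bar; rw [dif_pos h]

lemma bar_val_ge (i : Fin (M + N)) (h : M ≤ (i : ℕ)) :
    (bar M N i : ℕ) = 2 * M + N - 1 - (i : ℕ) := by
  unfold bar; rw [dif_neg (by omega)]

lemma bar_bar (i : Fin (M + N)) : bar M N (bar M N i) = i := by
  have hi := i.isLt
  apply Fin.ext
  rcases lt_or_ge (i : ℕ) M with h | h
  · have hb := bar_val_lt M N i h
    rw [bar_val_lt M N _ (by omega), hb]; omega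
  · have hb := bar_val_ge M N i h
    rw [bar_val_ge M N _ (by omega), hb]; omega

lemma bar_lt_iff (i : Fin (M + N)) : (bar M N i : ℕ) < M ↔ (i : ℕ) < M := by
  have hi := i.isLt
  rcases lt_or_ge (i : ℕ) M with h | h
  · have hb := bar_val_lt M N i h; omega
  · have hb := bar_val_ge M N i h; omega

lemma gr_bar (i : Fin (M + N)) : gr M N θ₀ (bar M N i) = gr M N θ₀ i := by
  unfold gr; exact if_congr (bar_lt_iff M N i) rfl rfl

lemma th_bar_lt (i : Fin (M + N)) (h : (i : ℕ) < M) : th M N (bar M N i) = 1 := by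
  have hb := bar_val_lt M N i h
  unfold th; rw [if_pos (by omega)]

lemma th_lt (i : Fin (M + N)) (h : (i : ℕ) < M) : th M N i = 1 := by
  unfold th; rw [if_pos (by omega)]

lemma th_bar_ge (i : Fin (M + N)) (h : M ≤ (i : ℕ)) (hN : Even N) :
    th M N (bar M N i) = - th M N i := by
  have hb := bar_val_ge M N i h
  obtain ⟨n, hn⟩ := hN
  have hi := i.isLt
  unfold th
  rcases lt_or_ge (i : ℕ) (M + N / 2) with h2 | h2
  · rw [if_neg (by omega), if_pos h2]; try norm_num
  · rw [if_pos (by omega), if_neg (by omega)]; try norm_num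

lemma key (hθ : θ₀ = 1 ∨ θ₀ = -1) (hN : Even N) (i : Fin (M + N)) :
    (-1 : ℂ) ^ (gr M N θ₀ (bar M N i)) * th M N (bar M N i) = (θ₀ : ℂ) * th M N i := by
  rw [gr_bar]
  rcases lt_or_ge (i : ℕ) M with h | h
  · rw [th_bar_lt M N i h, th_lt M N i h]
    unfold gr; rw [if_pos h]
    rcases hθ with h1 | h1 <;> subst h1 <;> norm_num
  · rw [th_bar_ge M N i h hN]
    unfold gr; rw [if_neg (by omega)]
    have h2 : th M N i = 1 ∨ th M N i = -1 := by unfold th; split_ifs <;> simp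
    rcases hθ with h1 | h1 <;> subst h1 <;> rcases h2 with h2 | h2 <;> rw [h2] <;> norm_num

lemma PK_eq (hθ : θ₀ = 1 ∨ θ₀ = -1) (hN : Even N) :
    gmul M N θ₀ (P M N θ₀) (K M N θ₀) = (θ₀ : ℂ) • K M N θ₀ := by
  funext p q
  unfold gmul
  rw [Fintype.sum_eq_single p.2 (fun j hj => by
    apply Finset.sum_eq_zero; intro l _
    have : P M N θ₀ p (j, l) = 0 := by
      unfold P; rw [if_neg]; rintro ⟨-, h2⟩; exact hj h2.symm
    rw [this, mul_zero, zero_mul])]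
  rw [Fintype.sum_eq_single p.1 (fun l hl => by
    have : P M N θ₀ p (p.2, l) = 0 := by
      unfold P; rw [if_neg]; rintro ⟨h1, -⟩; exact hl h1.symm
    rw [this, mul_zero, zero_mul])]
  have hP : P M N θ₀ p (p.2, p.1) = (-1 : ℂ) ^ gr M N θ₀ p.2 := by
    unfold P; rw [if_pos ⟨rfl, rfl⟩]
  rw [hP]
  rw [show ((θ₀:ℂ) • K M N θ₀) p q = (θ₀:ℂ) * K M N θ₀ p q from rfl]
  by_cases hc : p.1 = bar M N p.2
  · by_cases hq : q.1 = bar M N q.2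
    · have hc' : p.2 = bar M N p.1 := by rw [hc, bar_bar]
      have hK1 : K M N θ₀ (p.2, p.1) q =
          (-1 : ℂ) ^ (gr M N θ₀ q.2 * gr M N θ₀ p.1) * th M N q.2 * th M N p.1 := by
        unfold K; rw [if_pos ⟨hc', hq⟩]
      have hK2 : K M N θ₀ p q =
          (-1 : ℂ) ^ (gr M N θ₀ q.2 * gr M N θ₀ p.2) * th M N q.2 * th M N p.2 := by
        unfold K; rw [if_pos ⟨hc, hq⟩]
      have hgr : gr M N θ₀ p.1 = gr M N θ₀ p.2 := by rw [hc, gr_bar]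
      have hkey := key M N θ₀ hθ hN p.2
      rw [← hc] at hkey
      rw [hK1, hK2, hgr]
      rw [Even.neg_one_pow ⟨gr M N θ₀ p.2 * (gr M N θ₀ p.2 + gr M N θ₀ q.1), by ring⟩]
      rw [hgr] at hkey
      linear_combination ((-1 : ℂ) ^ (gr M N θ₀ q.2 * gr M N θ₀ p.2) * th M N q.2) * hkey
    · have h1 : K M N θ₀ (p.2, p.1) q = 0 := by
        unfold K; rw [if_neg]; rintro ⟨-, h⟩; exact hq h
      have h2 : K M N θ₀ p q = 0 := by
        unfold K; rw [if_neg]; rintro ⟨-, h⟩; exact hq h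
      rw [h1, h2]; simp
  · have hc' : p.2 ≠ bar M N p.1 := fun h => hc (by rw [h, bar_bar])
    have h1 : K M N θ₀ (p.2, p.1) q = 0 := by
      unfold K; rw [if_neg]; rintro ⟨h, -⟩; exact hc' h
    have h2 : K M N θ₀ p q = 0 := by
      unfold K; rw [if_neg]; rintro ⟨h, -⟩; exact hc h
    rw [h1, h2]; simp

lemma KP_eq (hθ : θ₀ = 1 ∨ θ₀ = -1) (hN : Even N) :
    gmul M N θ₀ (K M N θ₀) (P M N θ₀) = (θ₀ : ℂ) • K M N θ₀ := by
  funext p q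
  unfold gmul
  rw [Fintype.sum_eq_single q.2 (fun j hj => by
    apply Finset.sum_eq_zero; intro l _
    have : P M N θ₀ (j, l) q = 0 := by
      unfold P; rw [if_neg]; rintro ⟨h1, -⟩; exact hj h1
    rw [this, mul_zero])]
  rw [Fintype.sum_eq_single q.1 (fun l hl => by
    have : P M N θ₀ (q.2, l) q = 0 := by
      unfold P; rw [if_neg]; rintro ⟨-, h2⟩; exact hl h2
    rw [this, mul_zero])]
  have hP : P M N θ₀ (q.2, q.1) q = (-1 : ℂ) ^ gr M N θ₀ q.1 := by
    unfold P; rw [if_pos ⟨rfl, rfl⟩]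
  rw [hP]
  rw [show ((θ₀:ℂ) • K M N θ₀) p q = (θ₀:ℂ) * K M N θ₀ p q from rfl]
  by_cases hq : q.1 = bar M N q.2
  · by_cases hc : p.1 = bar M N p.2
    · have hq' : q.2 = bar M N q.1 := by rw [hq, bar_bar]
      have hK1 : K M N θ₀ p (q.2, q.1) =
          (-1 : ℂ) ^ (gr M N θ₀ q.1 * gr M N θ₀ p.2) * th M N q.1 * th M N p.2 := by
        unfold K; rw [if_pos ⟨hc, hq'⟩]
      have hK2 : K M N θ₀ p q =
          (-1 : ℂ) ^ (gr M N θ₀ q.2 * gr M N θ₀ p.2) * th M N q.2 * th M N p.2 := by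
        unfold K; rw [if_pos ⟨hc, hq⟩]
      have hgr : gr M N θ₀ q.1 = gr M N θ₀ q.2 := by rw [hq, gr_bar]
      have hkey := key M N θ₀ hθ hN q.2
      rw [← hq] at hkey
      rw [hK1, hK2, hgr]
      rw [Even.neg_one_pow ⟨(gr M N θ₀ p.2 + gr M N θ₀ q.2) * gr M N θ₀ q.2, by ring⟩]
      rw [hgr] at hkey
      linear_combination ((-1 : ℂ) ^ (gr M N θ₀ q.2 * gr M N θ₀ p.2) * th M N p.2) * hkey
    · have h1 : K M N θ₀ p (q.2, q.1) = 0 := by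
        unfold K; rw [if_neg]; rintro ⟨h, -⟩; exact hc h
      have h2 : K M N θ₀ p q = 0 := by
        unfold K; rw [if_neg]; rintro ⟨h, -⟩; exact hc h
      rw [h1, h2]; simp
  · have hq' : q.2 ≠ bar M N q.1 := fun h => hq (by rw [h, bar_bar])
    have h1 : K M N θ₀ p (q.2, q.1) = 0 := by
      unfold K; rw [if_neg]; rintro ⟨-, h⟩; exact hq' h
    have h2 : K M N θ₀ p q = 0 := by
      unfold K; rw [if_neg]; rintro ⟨-, h⟩; exact hq h
    rw [h1, h2]; simp

/-- `PK = KP = θ₀ K` in the graded tensor product algebra. -/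
theorem statement1 (hθ : θ₀ = 1 ∨ θ₀ = -1) (hN : Even N) :
    gmul M N θ₀ (P M N θ₀) (K M N θ₀) = gmul M N θ₀ (K M N θ₀) (P M N θ₀) ∧
    gmul M N θ₀ (P M N θ₀) (K M N θ₀) = (θ₀ : ℂ) • K M N θ₀ := by
  have h1 := PK_eq M N θ₀ hθ hN
  have h2 := KP_eq M N θ₀ hθ hN
  exact ⟨h1.trans h2.symm, h1⟩
end OspYangian
end
end

section
/- The relations P₁₂ P₂₃ K₁₂ = θ₀ P₁₃ K₁₂ and P₁₂ K₂₃ K₁₂ = θ₀ K₁₃ K₁₂ hold in the triple graded tensor product. -/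
open Matrix BigOperators Finset

noncomputable section

namespace OspYangian

variable (M N : ℕ) (θ₀ : ℤ)

/-- Coefficient matrices of elements of the graded triple tensor product. -/
abbrev Mat3 := Matrix (Fin (M + N) × Fin (M + N) × Fin (M + N))
  (Fin (M + N) × Fin (M + N) × Fin (M + N)) ℂ

/-- Multiplication in the graded triple tensor product algebra: the sign is
`(-1)^{(d₂+d₃)e₁ + d₃e₂}` where `d_a`, `e_a` are the degrees of the `a`-th factors. -/
def gmul3 (A B : Mat3 M N) : Mat3 M N := fun p q =>
  ∑ m : Fin (M + N) × Fin (M + N) × Fin (M + N),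
    (-1 : ℂ) ^ ((gr M N θ₀ p.2.1 + gr M N θ₀ m.2.1 + gr M N θ₀ p.2.2 + gr M N θ₀ m.2.2) *
          (gr M N θ₀ m.1 + gr M N θ₀ q.1) +
        (gr M N θ₀ p.2.2 + gr M N θ₀ m.2.2) * (gr M N θ₀ m.2.1 + gr M N θ₀ q.2.1)) *
      A p m * B m q

/-- Embedding `X ↦ X₁₂ = X ⊗ I` into the triple tensor product. -/
def emb12 (X : Mat M N) : Mat3 M N := fun p q =>
  if p.2.2 = q.2.2 then X (p.1, p.2.1) (q.1, q.2.1) else 0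

/-- Embedding `X ↦ X₁₃` into the triple tensor product. -/
def emb13 (X : Mat M N) : Mat3 M N := fun p q =>
  if p.2.1 = q.2.1 then X (p.1, p.2.2) (q.1, q.2.2) else 0

/-- Embedding `X ↦ X₂₃ = I ⊗ X` into the triple tensor product. -/
def emb23 (X : Mat M N) : Mat3 M N := fun p q =>
  if p.1 = q.1 then X p.2 q.2 else 0


lemma coe_bar (i : Fin (M + N)) :
    (bar M N i : ℕ) = if (i : ℕ) < M then M - 1 - (i : ℕ) else 2 * M + N - 1 - (i : ℕ) := by
  unfold bar; split <;> rfl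

lemma gr_cases (i : Fin (M + N)) : gr M N θ₀ i = 0 ∨ gr M N θ₀ i = 1 := by
  unfold gr; split_ifs <;> simp

lemma th_sq (i : Fin (M + N)) : th M N i * th M N i = 1 := by
  unfold th; split_ifs <;> norm_num

lemma th_bar (hθ : θ₀ = 1 ∨ θ₀ = -1) (hN : Even N) (i : Fin (M + N)) :
    th M N (bar M N i) = (θ₀ : ℂ) * (-1) ^ gr M N θ₀ i * th M N i := by
  obtain ⟨k, hk⟩ := hN
  have hi := i.isLt
  have h1 := coe_bar M N i
  unfold th gr
  rw [h1]
  rcases hθ with h | h <;> subst h <;> split_ifs <;>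
    first | contradiction | omega | norm_num

lemma gmul3_collapse (A B : Mat3 M N)
    (p q m₀ : Fin (M + N) × Fin (M + N) × Fin (M + N))
    (h : ∀ m, m ≠ m₀ → A p m = 0 ∨ B m q = 0) :
    gmul3 M N θ₀ A B p q =
      (-1 : ℂ) ^ ((gr M N θ₀ p.2.1 + gr M N θ₀ m₀.2.1 + gr M N θ₀ p.2.2 + gr M N θ₀ m₀.2.2) *
            (gr M N θ₀ m₀.1 + gr M N θ₀ q.1) +
          (gr M N θ₀ p.2.2 + gr M N θ₀ m₀.2.2) * (gr M N θ₀ m₀.2.1 + gr M N θ₀ q.2.1)) *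
        A p m₀ * B m₀ q := by
  unfold gmul3
  apply Fintype.sum_eq_single
  intro m hm
  rcases h m hm with h0 | h0 <;> rw [h0] <;> ring

lemma bar_eq_bar (M N : ℕ) (i j : Fin (M + N)) : bar M N i = bar M N j ↔ i = j := by
  constructor
  · intro h
    have := congrArg (bar M N) h
    rwa [bar_bar, bar_bar] at this
  · intro h; rw [h]

lemma emb12P_ne (p m : Fin (M+N) × Fin (M+N) × Fin (M+N)) (h : m ≠ (p.2.1, p.1, p.2.2)) :
    emb12 M N (P M N θ₀) p m = 0 := by
  obtain ⟨m1, m2, m3⟩ := m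
  simp only [emb12, P]
  split_ifs with h1 h2
  · exact absurd (by simp only [Prod.mk.injEq]; exact ⟨h2.2.symm, h2.1.symm, h1.symm⟩) h
  · rfl
  · rfl

lemma emb23P_ne (p m : Fin (M+N) × Fin (M+N) × Fin (M+N)) (h : m ≠ (p.1, p.2.2, p.2.1)) :
    emb23 M N (P M N θ₀) p m = 0 := by
  obtain ⟨m1, m2, m3⟩ := m
  simp only [emb23, P]
  split_ifs with h1 h2
  · exact absurd (by simp only [Prod.mk.injEq]; exact ⟨h1.symm, h2.2.symm, h2.1.symm⟩) h
  · rfl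
  · rfl

lemma emb13P_ne (p m : Fin (M+N) × Fin (M+N) × Fin (M+N)) (h : m ≠ (p.2.2, p.2.1, p.1)) :
    emb13 M N (P M N θ₀) p m = 0 := by
  obtain ⟨m1, m2, m3⟩ := m
  simp only [emb13, P]
  split_ifs with h1 h2
  · exact absurd (by simp only [Prod.mk.injEq]; exact ⟨h2.2.symm, h1.symm, h2.1.symm⟩) h
  · rfl
  · rfl

lemma pair23K (p q m : Fin (M+N) × Fin (M+N) × Fin (M+N))
    (hm : m ≠ (q.2.2, bar M N q.2.2, q.2.2)) :
    emb23 M N (K M N θ₀) p m = 0 ∨ emb12 M N (K M N θ₀) m q = 0 := by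
  obtain ⟨m1, m2, m3⟩ := m
  by_cases h1 : m3 = q.2.2
  · by_cases h2 : m2 = bar M N m3
    · by_cases h3 : m1 = bar M N m2
      · exfalso
        apply hm
        subst h3 h2 h1
        simp [bar_bar]
      · right; simp only [emb12, K]; split_ifs <;> first | rfl | tauto
    · left; simp only [emb23, K]; split_ifs <;> first | rfl | tauto
  · right; simp only [emb12, K]; split_ifs <;> first | rfl | tauto

lemma pair13K (p q m : Fin (M+N) × Fin (M+N) × Fin (M+N))
    (hm : m ≠ (bar M N q.2.2, p.2.1, q.2.2)) :
    emb13 M N (K M N θ₀) p m = 0 ∨ emb12 M N (K M N θ₀) m q = 0 := by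
  obtain ⟨m1, m2, m3⟩ := m
  by_cases h1 : m3 = q.2.2
  · by_cases h2 : m2 = p.2.1
    · by_cases h3 : m1 = bar M N m3
      · exfalso; apply hm; subst h3 h2 h1; rfl
      · left; simp only [emb13, K]; split_ifs <;> first | rfl | tauto
    · left; simp only [emb13, K]; split_ifs <;> first | rfl | tauto
  · right; simp only [emb12, K]; split_ifs <;> first | rfl | tauto

/-- `P₁₂ P₂₃ K₁₂ = θ₀ P₁₃ K₁₂` and `P₁₂ K₂₃ K₁₂ = θ₀ K₁₃ K₁₂`. -/
theorem statement7 (hθ : θ₀ = 1 ∨ θ₀ = -1) (hN : Even N) :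
    gmul3 M N θ₀ (emb12 M N (P M N θ₀))
        (gmul3 M N θ₀ (emb23 M N (P M N θ₀)) (emb12 M N (K M N θ₀))) =
      (θ₀ : ℂ) • gmul3 M N θ₀ (emb13 M N (P M N θ₀)) (emb12 M N (K M N θ₀)) ∧
    gmul3 M N θ₀ (emb12 M N (P M N θ₀))
        (gmul3 M N θ₀ (emb23 M N (K M N θ₀)) (emb12 M N (K M N θ₀))) =
      (θ₀ : ℂ) • gmul3 M N θ₀ (emb13 M N (K M N θ₀)) (emb12 M N (K M N θ₀)) := by
  constructor
  · funext p q
    rw [gmul3_collapse M N θ₀ _ _ p q (p.2.1, p.1, p.2.2)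
      (fun m hm => Or.inl (emb12P_ne M N θ₀ p m hm))]
    rw [gmul3_collapse M N θ₀ _ _ (p.2.1, p.1, p.2.2) q (p.2.1, p.2.2, p.1)
      (fun m hm => Or.inl (emb23P_ne M N θ₀ (p.2.1, p.1, p.2.2) m hm))]
    rw [Matrix.smul_apply]
    rw [gmul3_collapse M N θ₀ _ _ p q (p.2.2, p.2.1, p.1)
      (fun m hm => Or.inl (emb13P_ne M N θ₀ p m hm))]
    simp only [emb12, emb13, emb23, P, K, smul_eq_mul, and_self, if_true]
    split_ifs with h1 h2 h3 h3
    · -- main branch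
      obtain ⟨hb, hq⟩ := h2
      rw [hb]
      simp only [gr_bar, th_bar M N θ₀ hθ hN]
      rcases hθ with h | h <;> subst h <;> push_cast <;>
        rcases gr_cases M N _ p.1 with g1 | g1 <;>
        rcases gr_cases M N _ p.2.2 with g2 | g2 <;>
        rcases gr_cases M N _ q.1 with g3 | g3 <;>
        rcases gr_cases M N _ q.2.1 with g4 | g4 <;>
        rw [g1, g2, g3, g4] <;> norm_num <;> ring
    · exact absurd ⟨by rw [h2.1, bar_bar], h2.2⟩ h3
    · exact absurd ⟨by rw [h3.1, bar_bar], h3.2⟩ h2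
    · ring
    · ring
  · funext p q
    rw [gmul3_collapse M N θ₀ _ _ p q (p.2.1, p.1, p.2.2)
      (fun m hm => Or.inl (emb12P_ne M N θ₀ p m hm))]
    rw [gmul3_collapse M N θ₀ _ _ (p.2.1, p.1, p.2.2) q (q.2.2, bar M N q.2.2, q.2.2)
      (fun m hm => pair23K M N θ₀ (p.2.1, p.1, p.2.2) q m hm)]
    rw [Matrix.smul_apply]
    rw [gmul3_collapse M N θ₀ _ _ p q (bar M N q.2.2, p.2.1, q.2.2)
      (fun m hm => pair13K M N θ₀ p q m hm)]
    simp only [emb12, emb13, emb23, P, K, smul_eq_mul, and_self, if_true, bar_bar, and_true,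
      true_and, if_pos rfl]
    simp only [gr_bar, bar_eq_bar]
    split_ifs with h1 h2 h3 h4
    · rw [← h1]
      simp only [gr_bar, th_bar M N θ₀ hθ hN]
      rcases hθ with h | h <;> subst h <;> push_cast <;>
        rcases gr_cases M N _ p.1 with g1 | g1 <;>
        rcases gr_cases M N _ p.2.1 with g2 | g2 <;>
        rcases gr_cases M N _ p.2.2 with g3 | g3 <;>
        rcases gr_cases M N _ q.1 with g4 | g4 <;>
        rcases gr_cases M N _ q.2.1 with g5 | g5 <;>
        rw [g1, g2, g3, g4, g5] <;> norm_num <;> ring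
    all_goals first | ring1 | tauto
end OspYangian
end
end

section
/- Specializing to N = 0, θ₀ = 1 (the so(M) case), the matrix R(u) = I + P/u − K/(u+κ) with P = Σ E_{ij}⊗E_{ji}, K = Σ E_{ij}⊗E_{īȷ̄} (ī = M+1−i), and κ = (M−2)/2 satisfies the ordinary Yang–Baxter equation R₁₂(u)R₁₃(u+v)R₂₃(v) = R₂₃(v)R₁₃(u+v)R₁₂(u) on (ℂ^M)^{⊗3}. -/
open Matrix BigOperators Finset

noncomputable section

namespace SoYangian

variable (M : ℕ)

/-- Conjugate index `ī = M+1-i` (0-indexed: `M-1-i`). -/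
def baro (i : Fin M) : Fin M := ⟨M - 1 - (i : ℕ), by have := i.isLt; omega⟩

/-- The permutation operator `P = Σ_{i,j} E_{ij} ⊗ E_{ji}` on `ℂ^M ⊗ ℂ^M`. -/
def Po : Matrix (Fin M × Fin M) (Fin M × Fin M) ℂ := fun p q =>
  if p.1 = q.2 ∧ p.2 = q.1 then 1 else 0

/-- `K = Σ_{i,j} E_{j̄ ī} ⊗ E_{ji} = Σ_{i,j} E_{ij} ⊗ E_{ī ȷ̄}` on `ℂ^M ⊗ ℂ^M`. -/
def Ko : Matrix (Fin M × Fin M) (Fin M × Fin M) ℂ := fun p q =>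
  if p.1 = baro M p.2 ∧ q.1 = baro M q.2 then 1 else 0

/-- `κ = (M-2)/2`. -/
def kapo : ℂ := ((M : ℂ) - 2) / 2

/-- The rational R-matrix `R(u) = I + P/u - K/(u+κ)` in the `so(M)` case. -/
def Ro (u : ℂ) : Matrix (Fin M × Fin M) (Fin M × Fin M) ℂ :=
  1 + u⁻¹ • Po M - (u + kapo M)⁻¹ • Ko M

/-- Embedding `X ↦ X₁₂` into the triple tensor product (ordinary, ungraded). -/
def e12 (X : Matrix (Fin M × Fin M) (Fin M × Fin M) ℂ) :
    Matrix (Fin M × Fin M × Fin M) (Fin M × Fin M × Fin M) ℂ := fun p q =>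
  if p.2.2 = q.2.2 then X (p.1, p.2.1) (q.1, q.2.1) else 0

/-- Embedding `X ↦ X₁₃`. -/
def e13 (X : Matrix (Fin M × Fin M) (Fin M × Fin M) ℂ) :
    Matrix (Fin M × Fin M × Fin M) (Fin M × Fin M × Fin M) ℂ := fun p q =>
  if p.2.1 = q.2.1 then X (p.1, p.2.2) (q.1, q.2.2) else 0

/-- Embedding `X ↦ X₂₃`. -/
def e23 (X : Matrix (Fin M × Fin M) (Fin M × Fin M) ℂ) :
    Matrix (Fin M × Fin M × Fin M) (Fin M × Fin M × Fin M) ℂ := fun p q =>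
  if p.1 = q.1 then X p.2 q.2 else 0

-- ===== auxiliary machinery =====

lemma baro_baro (i : Fin M) : baro M (baro M i) = i := by
  simp only [baro, Fin.ext_iff]; have := i.isLt; omega

lemma baro_inj (i j : Fin M) : (baro M i = baro M j) ↔ (i = j) := by
  simp only [baro, Fin.ext_iff]; have := i.isLt; have := j.isLt; omega

lemma baro_eq_comm (i j : Fin M) : (i = baro M j) ↔ (j = baro M i) := by
  simp only [baro, Fin.ext_iff]; have := i.isLt; have := j.isLt; omega

abbrev V := Fin M × Fin M × Fin M

/-- permutation-type matrix attached to an index map -/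
def Pm (f : V M → V M) : Matrix (V M) (V M) ℂ := fun p q => if q = f p then 1 else 0

def fA : V M → V M := fun p => (p.2.1, p.1, p.2.2)
def fB : V M → V M := fun p => (p.2.2, p.2.1, p.1)
def fC : V M → V M := fun p => (p.1, p.2.2, p.2.1)
def fS : V M → V M := fun p => (p.2.2, p.1, p.2.1)
def fT : V M → V M := fun p => (p.2.1, p.2.2, p.1)

def Uo : Fin 3 → Matrix (V M) (Fin M) ℂ
  | 0 => fun p x => if p.2.1 = baro M p.2.2 ∧ p.1 = x then 1 else 0
  | 1 => fun p x => if p.1 = baro M p.2.2 ∧ p.2.1 = x then 1 else 0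
  | 2 => fun p x => if p.1 = baro M p.2.1 ∧ p.2.2 = x then 1 else 0

def Dm (e f : Fin 3) : Matrix (V M) (V M) ℂ := Uo M e * (Uo M f)ᵀ

/- generic multiplication lemmas -/

lemma Pm_mul {n : Type*} (f : V M → V M) (N : Matrix (V M) n ℂ) :
    Pm M f * N = N.submatrix f id := by
  ext p q
  rw [Matrix.mul_apply]
  simp [Pm, Matrix.submatrix]

lemma Pm_transpose (f : V M → V M) (hf : ∀ p, f (f p) = p) : (Pm M f)ᵀ = Pm M f := by
  ext p q
  simp only [Matrix.transpose_apply, Pm]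
  refine if_congr ?_ rfl rfl
  constructor
  · rintro rfl; rw [hf]
  · rintro rfl; rw [hf]

/- permutation products -/
lemma mulPP1 : Pm M (fA M) * Pm M (fB M) = Pm M (fS M) := by rw [Pm_mul]; rfl
lemma mulPP2 : Pm M (fA M) * Pm M (fC M) = Pm M (fT M) := by rw [Pm_mul]; rfl
lemma mulPP3 : Pm M (fB M) * Pm M (fC M) = Pm M (fS M) := by rw [Pm_mul]; rfl
lemma mulPP4 : Pm M (fB M) * Pm M (fA M) = Pm M (fT M) := by rw [Pm_mul]; rfl
lemma mulPP5 : Pm M (fC M) * Pm M (fA M) = Pm M (fS M) := by rw [Pm_mul]; rfl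
lemma mulPP6 : Pm M (fC M) * Pm M (fB M) = Pm M (fT M) := by rw [Pm_mul]; rfl
lemma mulPP7 : Pm M (fS M) * Pm M (fC M) = Pm M (fB M) := by rw [Pm_mul]; rfl
lemma mulPP8 : Pm M (fT M) * Pm M (fA M) = Pm M (fB M) := by rw [Pm_mul]; rfl

/- Pm * Uo instances -/
lemma PU_A1 : Pm M (fA M) * Uo M 1 = Uo M 0 := by rw [Pm_mul]; rfl
lemma PU_A0 : Pm M (fA M) * Uo M 0 = Uo M 1 := by rw [Pm_mul]; rfl
lemma PU_A2 : Pm M (fA M) * Uo M 2 = Uo M 2 := by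
  rw [Pm_mul]; ext p x; simp only [Matrix.submatrix_apply, Uo, fA, id]
  exact if_congr (and_congr_left' (baro_eq_comm M _ _)) rfl rfl
lemma PU_B0 : Pm M (fB M) * Uo M 0 = Uo M 2 := by
  rw [Pm_mul]; ext p x; simp only [Matrix.submatrix_apply, Uo, fB, id]
  exact if_congr (and_congr_left' (baro_eq_comm M _ _)) rfl rfl
lemma PU_B2 : Pm M (fB M) * Uo M 2 = Uo M 0 := by
  rw [Pm_mul]; ext p x; simp only [Matrix.submatrix_apply, Uo, fB, id]
  exact if_congr (and_congr_left' (baro_eq_comm M _ _)) rfl rfl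
lemma PU_C1 : Pm M (fC M) * Uo M 1 = Uo M 2 := by rw [Pm_mul]; rfl
lemma PU_C2 : Pm M (fC M) * Uo M 2 = Uo M 1 := by rw [Pm_mul]; rfl
lemma PU_C0 : Pm M (fC M) * Uo M 0 = Uo M 0 := by
  rw [Pm_mul]; ext p x; simp only [Matrix.submatrix_apply, Uo, fC, id]
  exact if_congr (and_congr_left' (baro_eq_comm M _ _)) rfl rfl
lemma PU_S0 : Pm M (fS M) * Uo M 0 = Uo M 2 := by rw [Pm_mul]; rfl
lemma PU_T2 : Pm M (fT M) * Uo M 2 = Uo M 0 := by rw [Pm_mul]; rfl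

/- transposed versions: (Uo f)ᵀ * Pm g -/
lemma hinvA : ∀ p, fA M (fA M p) = p := fun _ => rfl
lemma hinvB : ∀ p, fB M (fB M p) = p := fun _ => rfl
lemma hinvC : ∀ p, fC M (fC M p) = p := fun _ => rfl

lemma UtP_1C : (Uo M 1)ᵀ * Pm M (fC M) = (Uo M 2)ᵀ := by
  rw [← Pm_transpose M (fC M) (hinvC M), ← Matrix.transpose_mul, PU_C1]
lemma UtP_0C : (Uo M 0)ᵀ * Pm M (fC M) = (Uo M 0)ᵀ := by
  rw [← Pm_transpose M (fC M) (hinvC M), ← Matrix.transpose_mul, PU_C0]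
lemma UtP_1A : (Uo M 1)ᵀ * Pm M (fA M) = (Uo M 0)ᵀ := by
  rw [← Pm_transpose M (fA M) (hinvA M), ← Matrix.transpose_mul, PU_A1]
lemma UtP_2A : (Uo M 2)ᵀ * Pm M (fA M) = (Uo M 2)ᵀ := by
  rw [← Pm_transpose M (fA M) (hinvA M), ← Matrix.transpose_mul, PU_A2]
lemma UtP_2B : (Uo M 2)ᵀ * Pm M (fB M) = (Uo M 0)ᵀ := by
  rw [← Pm_transpose M (fB M) (hinvB M), ← Matrix.transpose_mul, PU_B2]
lemma UtP_2C : (Uo M 2)ᵀ * Pm M (fC M) = (Uo M 1)ᵀ := by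
  rw [← Pm_transpose M (fC M) (hinvC M), ← Matrix.transpose_mul, PU_C2]
lemma UtP_0B : (Uo M 0)ᵀ * Pm M (fB M) = (Uo M 2)ᵀ := by
  rw [← Pm_transpose M (fB M) (hinvB M), ← Matrix.transpose_mul, PU_B0]
lemma UtP_0A : (Uo M 0)ᵀ * Pm M (fA M) = (Uo M 1)ᵀ := by
  rw [← Pm_transpose M (fA M) (hinvA M), ← Matrix.transpose_mul, PU_A0]

/- (Uo f)ᵀ * Uo g : the Gram matrices -/
section UtU
set_option maxHeartbeats 1000000 in
lemma UtU00 : (Uo M 0)ᵀ * Uo M 0 = (M : ℂ) • 1 := by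
  ext x y
  rw [Matrix.mul_apply]
  simp only [Matrix.transpose_apply]
  simp only [Uo, Matrix.transpose_apply, ite_mul, one_mul, zero_mul, mul_ite, mul_one, mul_zero,
    Fintype.sum_prod_type, ite_and]
  simp [Finset.sum_ite_eq, Finset.sum_ite_eq', Matrix.one_apply, baro_eq_comm, baro_baro,
    baro_inj, eq_comm, Finset.card_univ]

set_option maxHeartbeats 1000000 in
lemma UtU11 : (Uo M 1)ᵀ * Uo M 1 = (M : ℂ) • 1 := by
  ext x y
  rw [Matrix.mul_apply]
  simp only [Matrix.transpose_apply]
  simp only [Uo, Matrix.transpose_apply, ite_mul, one_mul, zero_mul, mul_ite, mul_one, mul_zero,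
    Fintype.sum_prod_type, ite_and]
  simp [Finset.sum_ite_eq, Finset.sum_ite_eq', Matrix.one_apply, baro_eq_comm, baro_baro,
    baro_inj, eq_comm, Finset.card_univ]

set_option maxHeartbeats 1000000 in
lemma UtU22 : (Uo M 2)ᵀ * Uo M 2 = (M : ℂ) • 1 := by
  ext x y
  rw [Matrix.mul_apply]
  simp only [Matrix.transpose_apply]
  simp only [Uo, Matrix.transpose_apply, ite_mul, one_mul, zero_mul, mul_ite, mul_one, mul_zero,
    Fintype.sum_prod_type, ite_and]
  simp [Finset.sum_ite_eq, Finset.sum_ite_eq', Matrix.one_apply, baro_eq_comm, baro_baro,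
    baro_inj, eq_comm, Finset.card_univ]

set_option maxHeartbeats 1000000 in
lemma UtU01 : (Uo M 0)ᵀ * Uo M 1 = 1 := by
  ext x y
  rw [Matrix.mul_apply]
  simp only [Matrix.transpose_apply]
  simp only [Uo, Matrix.transpose_apply, ite_mul, one_mul, zero_mul, mul_ite, mul_one, mul_zero,
    Fintype.sum_prod_type, ite_and]
  simp [Finset.sum_ite_eq, Finset.sum_ite_eq', Matrix.one_apply, baro_eq_comm, baro_baro,
    baro_inj, eq_comm]

set_option maxHeartbeats 1000000 in
lemma UtU02 : (Uo M 0)ᵀ * Uo M 2 = 1 := by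
  ext x y
  rw [Matrix.mul_apply]
  simp only [Matrix.transpose_apply]
  simp only [Uo, Matrix.transpose_apply, ite_mul, one_mul, zero_mul, mul_ite, mul_one, mul_zero,
    Fintype.sum_prod_type, ite_and]
  simp [Finset.sum_ite_eq, Finset.sum_ite_eq', Matrix.one_apply, baro_eq_comm, baro_baro,
    baro_inj, eq_comm]

set_option maxHeartbeats 1000000 in
lemma UtU10 : (Uo M 1)ᵀ * Uo M 0 = 1 := by
  ext x y
  rw [Matrix.mul_apply]
  simp only [Matrix.transpose_apply]
  simp only [Uo, Matrix.transpose_apply, ite_mul, one_mul, zero_mul, mul_ite, mul_one, mul_zero,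
    Fintype.sum_prod_type, ite_and]
  simp [Finset.sum_ite_eq, Finset.sum_ite_eq', Matrix.one_apply, baro_eq_comm, baro_baro,
    baro_inj, eq_comm]

set_option maxHeartbeats 1000000 in
lemma UtU12 : (Uo M 1)ᵀ * Uo M 2 = 1 := by
  ext x y
  rw [Matrix.mul_apply]
  simp only [Matrix.transpose_apply]
  simp only [Uo, Matrix.transpose_apply, ite_mul, one_mul, zero_mul, mul_ite, mul_one, mul_zero,
    Fintype.sum_prod_type, ite_and]
  simp [Finset.sum_ite_eq, Finset.sum_ite_eq', Matrix.one_apply, baro_eq_comm, baro_baro,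
    baro_inj, eq_comm]

set_option maxHeartbeats 1000000 in
lemma UtU20 : (Uo M 2)ᵀ * Uo M 0 = 1 := by
  ext x y
  rw [Matrix.mul_apply]
  simp only [Matrix.transpose_apply]
  simp only [Uo, Matrix.transpose_apply, ite_mul, one_mul, zero_mul, mul_ite, mul_one, mul_zero,
    Fintype.sum_prod_type, ite_and]
  simp [Finset.sum_ite_eq, Finset.sum_ite_eq', Matrix.one_apply, baro_eq_comm, baro_baro,
    baro_inj, eq_comm]

set_option maxHeartbeats 1000000 in
lemma UtU21 : (Uo M 2)ᵀ * Uo M 1 = 1 := by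
  ext x y
  rw [Matrix.mul_apply]
  simp only [Matrix.transpose_apply]
  simp only [Uo, Matrix.transpose_apply, ite_mul, one_mul, zero_mul, mul_ite, mul_one, mul_zero,
    Fintype.sum_prod_type, ite_and]
  simp [Finset.sum_ite_eq, Finset.sum_ite_eq', Matrix.one_apply, baro_eq_comm, baro_baro,
    baro_inj, eq_comm]
end UtU

/- derived product lemmas on the Dm/Pm atoms -/

lemma mulPD_A1 (f : Fin 3) : Pm M (fA M) * Dm M 1 f = Dm M 0 f := by
  simp only [Dm]; rw [← Matrix.mul_assoc, PU_A1]
lemma mulPD_A0 (f : Fin 3) : Pm M (fA M) * Dm M 0 f = Dm M 1 f := by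
  simp only [Dm]; rw [← Matrix.mul_assoc, PU_A0]
lemma mulPD_B0 (f : Fin 3) : Pm M (fB M) * Dm M 0 f = Dm M 2 f := by
  simp only [Dm]; rw [← Matrix.mul_assoc, PU_B0]
lemma mulPD_B2 (f : Fin 3) : Pm M (fB M) * Dm M 2 f = Dm M 0 f := by
  simp only [Dm]; rw [← Matrix.mul_assoc, PU_B2]
lemma mulPD_C1 (f : Fin 3) : Pm M (fC M) * Dm M 1 f = Dm M 2 f := by
  simp only [Dm]; rw [← Matrix.mul_assoc, PU_C1]
lemma mulPD_C2 (f : Fin 3) : Pm M (fC M) * Dm M 2 f = Dm M 1 f := by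
  simp only [Dm]; rw [← Matrix.mul_assoc, PU_C2]
lemma mulPD_S0 (f : Fin 3) : Pm M (fS M) * Dm M 0 f = Dm M 2 f := by
  simp only [Dm]; rw [← Matrix.mul_assoc, PU_S0]
lemma mulPD_T2 (f : Fin 3) : Pm M (fT M) * Dm M 2 f = Dm M 0 f := by
  simp only [Dm]; rw [← Matrix.mul_assoc, PU_T2]

lemma mulDP_1C (e : Fin 3) : Dm M e 1 * Pm M (fC M) = Dm M e 2 := by
  simp only [Dm]; rw [Matrix.mul_assoc, UtP_1C]
lemma mulDP_0C (e : Fin 3) : Dm M e 0 * Pm M (fC M) = Dm M e 0 := by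
  simp only [Dm]; rw [Matrix.mul_assoc, UtP_0C]
lemma mulDP_1A (e : Fin 3) : Dm M e 1 * Pm M (fA M) = Dm M e 0 := by
  simp only [Dm]; rw [Matrix.mul_assoc, UtP_1A]
lemma mulDP_2A (e : Fin 3) : Dm M e 2 * Pm M (fA M) = Dm M e 2 := by
  simp only [Dm]; rw [Matrix.mul_assoc, UtP_2A]
lemma mulDP_2B (e : Fin 3) : Dm M e 2 * Pm M (fB M) = Dm M e 0 := by
  simp only [Dm]; rw [Matrix.mul_assoc, UtP_2B]
lemma mulDP_2C (e : Fin 3) : Dm M e 2 * Pm M (fC M) = Dm M e 1 := by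
  simp only [Dm]; rw [Matrix.mul_assoc, UtP_2C]
lemma mulDP_0B (e : Fin 3) : Dm M e 0 * Pm M (fB M) = Dm M e 2 := by
  simp only [Dm]; rw [Matrix.mul_assoc, UtP_0B]
lemma mulDP_0A (e : Fin 3) : Dm M e 0 * Pm M (fA M) = Dm M e 1 := by
  simp only [Dm]; rw [Matrix.mul_assoc, UtP_0A]

lemma mulDD_00 (e h : Fin 3) : Dm M e 0 * Dm M 0 h = (M : ℂ) • Dm M e h := by
  simp only [Dm]; rw [Matrix.mul_assoc, ← Matrix.mul_assoc (Uo M 0)ᵀ, UtU00, Matrix.smul_mul, Matrix.one_mul, Matrix.mul_smul]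
lemma mulDD_11 (e h : Fin 3) : Dm M e 1 * Dm M 1 h = (M : ℂ) • Dm M e h := by
  simp only [Dm]; rw [Matrix.mul_assoc, ← Matrix.mul_assoc (Uo M 1)ᵀ, UtU11, Matrix.smul_mul, Matrix.one_mul, Matrix.mul_smul]
lemma mulDD_22 (e h : Fin 3) : Dm M e 2 * Dm M 2 h = (M : ℂ) • Dm M e h := by
  simp only [Dm]; rw [Matrix.mul_assoc, ← Matrix.mul_assoc (Uo M 2)ᵀ, UtU22, Matrix.smul_mul, Matrix.one_mul, Matrix.mul_smul]
lemma mulDD_01 (e h : Fin 3) : Dm M e 0 * Dm M 1 h = Dm M e h := by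
  simp only [Dm]; rw [Matrix.mul_assoc, ← Matrix.mul_assoc (Uo M 0)ᵀ, UtU01, Matrix.one_mul]
lemma mulDD_02 (e h : Fin 3) : Dm M e 0 * Dm M 2 h = Dm M e h := by
  simp only [Dm]; rw [Matrix.mul_assoc, ← Matrix.mul_assoc (Uo M 0)ᵀ, UtU02, Matrix.one_mul]
lemma mulDD_10 (e h : Fin 3) : Dm M e 1 * Dm M 0 h = Dm M e h := by
  simp only [Dm]; rw [Matrix.mul_assoc, ← Matrix.mul_assoc (Uo M 1)ᵀ, UtU10, Matrix.one_mul]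
lemma mulDD_12 (e h : Fin 3) : Dm M e 1 * Dm M 2 h = Dm M e h := by
  simp only [Dm]; rw [Matrix.mul_assoc, ← Matrix.mul_assoc (Uo M 1)ᵀ, UtU12, Matrix.one_mul]
lemma mulDD_20 (e h : Fin 3) : Dm M e 2 * Dm M 0 h = Dm M e h := by
  simp only [Dm]; rw [Matrix.mul_assoc, ← Matrix.mul_assoc (Uo M 2)ᵀ, UtU20, Matrix.one_mul]
lemma mulDD_21 (e h : Fin 3) : Dm M e 2 * Dm M 1 h = Dm M e h := by
  simp only [Dm]; rw [Matrix.mul_assoc, ← Matrix.mul_assoc (Uo M 2)ᵀ, UtU21, Matrix.one_mul]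

/- identification of the embedded R-matrix pieces -/

lemma Dm22_apply (p q : V M) :
    Dm M 2 2 p q = if (p.1 = baro M p.2.1 ∧ q.1 = baro M q.2.1) ∧ p.2.2 = q.2.2
      then 1 else 0 := by
  rw [Dm, Matrix.mul_apply]
  simp only [Matrix.transpose_apply]
  simp only [Uo, Matrix.transpose_apply, ite_mul, one_mul, zero_mul, mul_ite, mul_one, mul_zero,
    ite_and]
  simp [Finset.sum_ite_eq, Finset.sum_ite_eq']
  split_ifs <;> rfl

lemma Dm11_apply (p q : V M) :
    Dm M 1 1 p q = if (p.1 = baro M p.2.2 ∧ q.1 = baro M q.2.2) ∧ p.2.1 = q.2.1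
      then 1 else 0 := by
  rw [Dm, Matrix.mul_apply]
  simp only [Matrix.transpose_apply]
  simp only [Uo, Matrix.transpose_apply, ite_mul, one_mul, zero_mul, mul_ite, mul_one, mul_zero,
    ite_and]
  simp [Finset.sum_ite_eq, Finset.sum_ite_eq']
  split_ifs <;> rfl

lemma Dm00_apply (p q : V M) :
    Dm M 0 0 p q = if (p.2.1 = baro M p.2.2 ∧ q.2.1 = baro M q.2.2) ∧ p.1 = q.1
      then 1 else 0 := by
  rw [Dm, Matrix.mul_apply]
  simp only [Matrix.transpose_apply]
  simp only [Uo, Matrix.transpose_apply, ite_mul, one_mul, zero_mul, mul_ite, mul_one, mul_zero,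
    ite_and]
  simp [Finset.sum_ite_eq, Finset.sum_ite_eq']
  split_ifs <;> rfl

lemma e12_Ro (u : ℂ) :
    e12 M (Ro M u) = 1 + u⁻¹ • Pm M (fA M) - (u + kapo M)⁻¹ • Dm M 2 2 := by
  ext p q
  simp only [e12, Ro, Matrix.sub_apply, Matrix.add_apply, Matrix.smul_apply, Matrix.one_apply,
    Po, Ko, Pm, fA, Dm22_apply, smul_eq_mul, Prod.ext_iff, Prod.mk.injEq]
  by_cases h : p.2.2 = q.2.2 <;> simp [h, @eq_comm _ q.2.2 p.2.2] <;> split_ifs <;> simp_all <;> ring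

lemma e13_Ro (u : ℂ) :
    e13 M (Ro M u) = 1 + u⁻¹ • Pm M (fB M) - (u + kapo M)⁻¹ • Dm M 1 1 := by
  ext p q
  simp only [e13, Ro, Matrix.sub_apply, Matrix.add_apply, Matrix.smul_apply, Matrix.one_apply,
    Po, Ko, Pm, fB, Dm11_apply, smul_eq_mul, Prod.ext_iff, Prod.mk.injEq]
  by_cases h : p.2.1 = q.2.1 <;> simp [h, @eq_comm _ q.2.1 p.2.1] <;> split_ifs <;> simp_all <;> ring

lemma e23_Ro (u : ℂ) :
    e23 M (Ro M u) = 1 + u⁻¹ • Pm M (fC M) - (u + kapo M)⁻¹ • Dm M 0 0 := by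
  ext p q
  simp only [e23, Ro, Matrix.sub_apply, Matrix.add_apply, Matrix.smul_apply, Matrix.one_apply,
    Po, Ko, Pm, fC, Dm00_apply, smul_eq_mul, Prod.ext_iff, Prod.mk.injEq]
  by_cases h : p.1 = q.1 <;> simp [h, @eq_comm _ q.1 p.1] <;> split_ifs <;> simp_all <;> ring

lemma e12_Ro' (u : ℂ) (hu : u ≠ 0) (huk : u + kapo M ≠ 0) :
    (u * (u + kapo M)) • e12 M (Ro M u) =
      (u * (u + kapo M)) • (1 : Matrix (V M) (V M) ℂ)
        + (u + kapo M) • Pm M (fA M) - u • Dm M 2 2 := by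
  rw [e12_Ro, smul_sub, smul_add, smul_smul, smul_smul,
    show u * (u + kapo M) * u⁻¹ = u + kapo M by field_simp,
    show u * (u + kapo M) * (u + kapo M)⁻¹ = u by field_simp]

lemma e13_Ro' (u : ℂ) (hu : u ≠ 0) (huk : u + kapo M ≠ 0) :
    (u * (u + kapo M)) • e13 M (Ro M u) =
      (u * (u + kapo M)) • (1 : Matrix (V M) (V M) ℂ)
        + (u + kapo M) • Pm M (fB M) - u • Dm M 1 1 := by
  rw [e13_Ro, smul_sub, smul_add, smul_smul, smul_smul,
    show u * (u + kapo M) * u⁻¹ = u + kapo M by field_simp,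
    show u * (u + kapo M) * (u + kapo M)⁻¹ = u by field_simp]

lemma e23_Ro' (u : ℂ) (hu : u ≠ 0) (huk : u + kapo M ≠ 0) :
    (u * (u + kapo M)) • e23 M (Ro M u) =
      (u * (u + kapo M)) • (1 : Matrix (V M) (V M) ℂ)
        + (u + kapo M) • Pm M (fC M) - u • Dm M 0 0 := by
  rw [e23_Ro, smul_sub, smul_add, smul_smul, smul_smul,
    show u * (u + kapo M) * u⁻¹ = u + kapo M by field_simp,
    show u * (u + kapo M) * (u + kapo M)⁻¹ = u by field_simp]

lemma smul_mul3 (c1 c2 c3 : ℂ) (X Y Z : Matrix (V M) (V M) ℂ) :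
    (c1 • X) * (c2 • Y) * (c3 • Z) = (c1 * c2 * c3) • (X * Y * Z) := by
  simp only [smul_mul_assoc, mul_smul_comm, smul_smul]
  congr 1
  ring

set_option maxHeartbeats 4000000 in
/-- the ordinary Yang–Baxter equation
`R₁₂(u) R₁₃(u+v) R₂₃(v) = R₂₃(v) R₁₃(u+v) R₁₂(u)` for the `so(M)` R-matrix
`R(u) = I + P/u - K/(u+κ)`, `κ = (M-2)/2`, on `(ℂ^M)^{⊗3}`. -/
theorem statement12 (u v : ℂ) (hu : u ≠ 0) (hv : v ≠ 0) (huv : u + v ≠ 0)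
    (huk : u + kapo M ≠ 0) (hvk : v + kapo M ≠ 0) (huvk : u + v + kapo M ≠ 0) :
    e12 M (Ro M u) * e13 M (Ro M (u + v)) * e23 M (Ro M v) =
      e23 M (Ro M v) * e13 M (Ro M (u + v)) * e12 M (Ro M u) := by
  have hc : (u * (u + kapo M)) * ((u + v) * (u + v + kapo M)) * (v * (v + kapo M)) ≠ 0 :=
    mul_ne_zero (mul_ne_zero (mul_ne_zero hu huk) (mul_ne_zero huv huvk)) (mul_ne_zero hv hvk)
  apply smul_right_injective (Matrix (V M) (V M) ℂ) hc
  show ((u * (u + kapo M)) * ((u + v) * (u + v + kapo M)) * (v * (v + kapo M))) •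
      (e12 M (Ro M u) * e13 M (Ro M (u + v)) * e23 M (Ro M v)) =
    ((u * (u + kapo M)) * ((u + v) * (u + v + kapo M)) * (v * (v + kapo M))) •
      (e23 M (Ro M v) * e13 M (Ro M (u + v)) * e12 M (Ro M u))
  rw [← smul_mul3, e12_Ro' M u hu huk, e13_Ro' M (u + v) huv huvk, e23_Ro' M v hv hvk]
  rw [show (u * (u + kapo M)) * ((u + v) * (u + v + kapo M)) * (v * (v + kapo M))
      = (v * (v + kapo M)) * ((u + v) * (u + v + kapo M)) * (u * (u + kapo M)) by ring]
  rw [← smul_mul3, e23_Ro' M v hv hvk, e13_Ro' M (u + v) huv huvk, e12_Ro' M u hu huk]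
  simp only [mul_add, add_mul, mul_sub, sub_mul, smul_mul_assoc, mul_smul_comm, one_mul, mul_one,
    smul_smul, smul_add, smul_sub,
    mulPP1, mulPP2, mulPP3, mulPP4, mulPP5, mulPP6, mulPP7, mulPP8,
    mulPD_A1, mulPD_A0, mulPD_B0, mulPD_B2, mulPD_C1, mulPD_C2, mulPD_S0, mulPD_T2,
    mulDP_1C, mulDP_0C, mulDP_1A, mulDP_2A, mulDP_2B, mulDP_2C, mulDP_0B, mulDP_0A,
    mulDD_00, mulDD_11, mulDD_22, mulDD_01, mulDD_02, mulDD_10, mulDD_12, mulDD_20, mulDD_21]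
  match_scalars
  all_goals simp only [kapo]
  all_goals ring
end SoYangian
end
end

section
/- In the ungraded orthogonal case (N = 0, θ₀ = 1), the R-matrix satisfies crossing unitarity combined with unitarity: R(u)R(−u) = (1 − 1/u²)I, where R(u) = I + P/u − K/(u+κ), κ = (M−2)/2, P the permutation on ℂ^M⊗ℂ^M and K = Σ E_{j̄ ī}⊗E_{ji} with ī = M+1−i. -/
open Matrix BigOperators Finset

noncomputable section

namespace SoYangian

variable (M : ℕ)

lemma baro_eq_iff (i j : Fin M) : i = baro M j ↔ j = baro M i := by
  constructor <;> rintro rfl <;> rw [baro_baro]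

lemma Po_mul_Po : Po M * Po M = 1 := by
  ext p q
  rw [Matrix.mul_apply, Finset.sum_eq_single (p.2, p.1)]
  · simp [Po, Matrix.one_apply, Prod.ext_iff, and_comm, eq_comm]
  · rintro ⟨r1, r2⟩ - hr
    simp only [Po]
    rw [if_neg]
    · simp
    · rintro ⟨rfl, rfl⟩; exact hr rfl
  · simp

lemma Po_mul_Ko : Po M * Ko M = Ko M := by
  ext p q
  rw [Matrix.mul_apply, Finset.sum_eq_single (p.2, p.1)]
  · simp [Po, Ko, baro_eq_iff M p.2 p.1]
  · rintro ⟨r1, r2⟩ - hr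
    simp only [Po]
    rw [if_neg]
    · simp
    · rintro ⟨rfl, rfl⟩; exact hr rfl
  · simp

lemma Ko_mul_Po : Ko M * Po M = Ko M := by
  ext p q
  rw [Matrix.mul_apply, Finset.sum_eq_single (q.2, q.1)]
  · simp [Po, Ko, baro_eq_iff M q.2 q.1]
  · rintro ⟨r1, r2⟩ - hr
    simp only [Po]
    rw [if_neg, mul_zero]
    rintro ⟨rfl, rfl⟩; exact hr rfl
  · simp

lemma Ko_mul_Ko : Ko M * Ko M = (M : ℂ) • Ko M := by
  ext p q
  rw [Matrix.mul_apply]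
  simp only [Ko, Matrix.smul_apply, smul_eq_mul, Fintype.sum_prod_type]
  by_cases hp : p.1 = baro M p.2 <;> by_cases hq : q.1 = baro M q.2 <;>
    simp [hp, hq, baro_eq_iff, Finset.sum_ite_eq', Finset.mul_sum]

lemma expand (α β γ δ : ℂ) :
    (1 + α • Po M - β • Ko M) * (1 + γ • Po M - δ • Ko M)
    = (1 + α * γ) • 1 + (α + γ) • Po M
      + (β * δ * M - δ - α * δ - β - β * γ) • Ko M := by
  simp only [add_mul, sub_mul, mul_add, mul_sub, Matrix.smul_mul, Matrix.mul_smul,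
    one_mul, mul_one, Po_mul_Po, Po_mul_Ko, Ko_mul_Po, Ko_mul_Ko, smul_smul]
  module

/-- in the ungraded orthogonal case, unitarity
`R(u) R(-u) = (1 - 1/u²) I` with `κ = (M-2)/2`. -/
theorem statement18 (hM : 1 ≤ M) (u : ℂ) (hu : u ≠ 0)
    (huk : u ≠ kapo M) (huk' : u ≠ -kapo M) :
    Ro M u * Ro M (-u) = (1 - 1 / u ^ 2) • (1 : Matrix (Fin M × Fin M) (Fin M × Fin M) ℂ) := by
  have ha : u + kapo M ≠ 0 := fun h => huk' (by linear_combination h)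
  have hb : -u + kapo M ≠ 0 := fun h => huk (by linear_combination -h)
  have hMc : (M : ℂ) = 2 * kapo M + 2 := by unfold kapo; ring
  rw [Ro, Ro, expand]
  have h1 : u⁻¹ + (-u)⁻¹ = 0 := by field_simp; ring
  have h2 : (1 : ℂ) + u⁻¹ * (-u)⁻¹ = 1 - 1 / u ^ 2 := by field_simp; ring
  have h3' : (u + kapo M)⁻¹ * (-u + kapo M)⁻¹ * (2 * kapo M + 2)
      + (u + kapo M)⁻¹ * u⁻¹
      = (-u + kapo M)⁻¹ + u⁻¹ * (-u + kapo M)⁻¹ + (u + kapo M)⁻¹ := by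
    field_simp
    ring
  have h3 : (u + kapo M)⁻¹ * (-u + kapo M)⁻¹ * M - (-u + kapo M)⁻¹
      - u⁻¹ * (-u + kapo M)⁻¹ - (u + kapo M)⁻¹ - (u + kapo M)⁻¹ * (-u)⁻¹ = 0 := by
    rw [hMc, inv_neg, mul_neg, sub_neg_eq_add]
    linear_combination h3'
  rw [h1, h2, h3, zero_smul, zero_smul, add_zero, add_zero]
end SoYangian
end
end
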